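/- At fixed charge Q, for a toral AdS black hole the time derivatives satisfy dT/dt = ħ·(3/(2γ−1))·(1/(2π²K²r_h²))·dM/dt, where r_h³ = γML²/(πK²); hence for γ ∈ (1/2, 2] and dM/dt < 0, dT/dt < 0, so the specific heat dM/dT is positive. -/

import Mathlib

open Real

/-- At fixed charge, dT/dt = hbar(3/(2γ−1))(1/(2π²K²r_h²)) dM/dt; hence dT/dt < 0 when
    dM/dt < 0, so the specific heat is positive. -/
theorem stmt11 (Q L K hbar : ℝ) (hQ : 0 < Q) (hL : 0 < L) (hK : 0 < K) (hhbar : 0 < hbar)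
    (M rh T γ : ℝ → ℝ)
    (hMd : Differentiable ℝ M) (hrd : Differentiable ℝ rh)
    (hMpos : ∀ t, 0 < M t) (hrpos : ∀ t, 0 < rh t)
    (hhor : ∀ t, (rh t)^2/L^2 - 2*M t/(π*K^2*rh t) + Q^2/(4*π^3*K^4*(rh t)^2) = 0)
    (hT : ∀ t, T t = hbar*(rh t/(π*L^2) - M t/(2*π^2*K^2*(rh t)^2)))
    (hγ : ∀ t, (rh t)^3 = γ t * M t * L^2/(π*K^2))
    (hγr : ∀ t, γ t ∈ Set.Ioc (1/2:ℝ) 2)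
    (hTpos : ∀ t, 0 < T t)
    (hdr : ∀ t, deriv rh t = hbar/(2*π^2*(T t)*K^2*(rh t)) * deriv M t) :
    ∀ t, deriv T t = hbar*(3/(2*γ t - 1))*(1/(2*π^2*K^2*(rh t)^2))*deriv M t ∧
      (deriv M t < 0 → deriv T t < 0) := by
  intro t
  have hπ : (0:ℝ) < π := Real.pi_pos
  have hr := hrpos t
  have hM0 := hMpos t
  have hg := (hγr t).1
  have hg2 : (0:ℝ) < 2 * γ t - 1 := by linarith
  have hgpos : (0:ℝ) < γ t := by linarith
  have hT0 := hTpos t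
  have hrne : rh t ≠ 0 := ne_of_gt hr
  have hLne : L ≠ 0 := ne_of_gt hL
  have hKne : K ≠ 0 := ne_of_gt hK
  have hπne : π ≠ 0 := ne_of_gt hπ
  have hTne : T t ≠ 0 := ne_of_gt hT0
  have hgne : γ t ≠ 0 := ne_of_gt hgpos
  -- T as a function
  have hTfun : T = fun s => hbar*(rh s/(π*L^2) - M s/(2*π^2*K^2*(rh s)^2)) := funext hT
  have hden : (2*π^2*K^2*(rh t)^2) ≠ 0 := by positivity
  have hr' : HasDerivAt rh (deriv rh t) t := (hrd t).hasDerivAt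
  have hM' : HasDerivAt M (deriv M t) t := (hMd t).hasDerivAt
  have hD : HasDerivAt (fun s => hbar*(rh s/(π*L^2) - M s/(2*π^2*K^2*(rh s)^2)))
      (hbar*((deriv rh t * (π*L^2) - rh t * 0)/(π*L^2)^2 -
        (deriv M t * (2*π^2*K^2*(rh t)^2) - M t * (2*π^2*K^2*(2*rh t*deriv rh t)))
          /(2*π^2*K^2*(rh t)^2)^2)) t := by
    apply HasDerivAt.const_mul
    apply HasDerivAt.sub
    · exact (hr'.div (hasDerivAt_const t (π*L^2)) (by positivity))
    · have hc : HasDerivAt (fun s => 2*π^2*K^2*(rh s)^2) (2*π^2*K^2*(2*rh t*deriv rh t)) t := by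
        have h2 : HasDerivAt (fun s => 2*π^2*K^2*(rh s)^2) (2*π^2*K^2*(((2:ℕ):ℝ) * rh t^(2-1) * deriv rh t)) t := (hr'.pow 2).const_mul (2*π^2*K^2)
        convert h2 using 1
        push_cast
        ring
      exact hM'.div hc hden
  have hderivT : deriv T t = hbar*((deriv rh t * (π*L^2) - rh t * 0)/(π*L^2)^2 -
        (deriv M t * (2*π^2*K^2*(rh t)^2) - M t * (2*π^2*K^2*(2*rh t*deriv rh t)))
          /(2*π^2*K^2*(rh t)^2)^2) := by
    rw [hTfun]; exact hD.deriv
  -- express M in terms of r and γ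
  have hM : M t = π*K^2*(rh t)^3/(γ t * L^2) := by
    have := hγ t
    field_simp at this ⊢
    linarith [this]
  -- T in terms of r and γ
  have hTval : T t = hbar * rh t * (2*γ t - 1)/(2*π*(γ t)*L^2) := by
    rw [hT t, hM]; field_simp
  constructor
  · rw [hderivT, hdr t, hTval, hM]
    field_simp
    ring
  · intro hMneg
    rw [hderivT, hdr t, hTval, hM]
    have key : hbar*((hbar/(2*π^2*(hbar * rh t * (2*γ t - 1)/(2*π*(γ t)*L^2))*K^2*(rh t)) * deriv M t * (π*L^2) - rh t * 0)/(π*L^2)^2 -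
        (deriv M t * (2*π^2*K^2*(rh t)^2) - π*K^2*(rh t)^3/(γ t * L^2) * (2*π^2*K^2*(2*rh t*(hbar/(2*π^2*(hbar * rh t * (2*γ t - 1)/(2*π*(γ t)*L^2))*K^2*(rh t)) * deriv M t))))
          /(2*π^2*K^2*(rh t)^2)^2)
        = hbar*(3/(2*γ t - 1))*(1/(2*π^2*K^2*(rh t)^2))*deriv M t := by
      field_simp
      ring
    rw [key]
    apply mul_neg_of_pos_of_neg _ hMneg
    positivity
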